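/- For any bounded reward r : ℕ → ℝ and any causal scheduling policy producing indicator c : ℕ → {0,1} and induced age Δ via Δ(t+1) = 1 if c(t)=1 else Δ(t)+1 with Δ(1)=1, the long-run average reward lim sup_{T→∞} (1/T)∑_{t=1}^{T}(1−c(t))·r(Δ(t)) is at most sup_{τ≥0} (∑_{k=1}^{τ} r(k))/(τ+1), provided r is nonnegative. -/

import Mathlib

open Finset Filter

/-- For any nonnegative bounded reward `r` and any scheduling policy
`c : ℕ → Bool` with induced age `Δ(t+1) = 1` if `c(t)` else `Δ(t)+1`, `Δ(1) = 1`, the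
long-run average reward `lim sup_{T→∞} (1/T)∑_{t=1}^{T}(1−c(t))·r(Δ(t))` is at most
`sup_{τ≥0} (∑_{k=1}^{τ} r(k))/(τ+1)`. -/
theorem stmt_16 (r : ℕ → ℝ) (hnn : ∀ n, 0 ≤ r n) (hbdd : ∃ M : ℝ, ∀ n, |r n| ≤ M)
    (c : ℕ → Bool) (Δ : ℕ → ℕ) (hΔ1 : Δ 1 = 1)
    (hrec : ∀ t : ℕ, 1 ≤ t → Δ (t + 1) = if c t then 1 else Δ t + 1) :
    Filter.limsup
      (fun T : ℕ => (1 / (T : ℝ)) *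
        ∑ t ∈ Finset.Icc 1 T, (if c t then 0 else r (Δ t)))
      Filter.atTop
      ≤ ⨆ τ : ℕ, (∑ k ∈ Finset.Icc 1 τ, r k) / ((τ : ℝ) + 1) := by
  obtain ⟨M, hM⟩ := hbdd
  have hM0 : 0 ≤ M := le_trans (abs_nonneg _) (hM 0)
  set S : ℝ := ⨆ τ : ℕ, (∑ k ∈ Finset.Icc 1 τ, r k) / ((τ : ℝ) + 1) with hSdef
  have hA : BddAbove (Set.range fun τ : ℕ => (∑ k ∈ Finset.Icc 1 τ, r k) / ((τ : ℝ) + 1)) := by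
    refine ⟨M, ?_⟩
    rintro x ⟨τ, rfl⟩
    have hpos : (0:ℝ) < (τ : ℝ) + 1 := by positivity
    rw [div_le_iff₀ hpos]
    calc (∑ k ∈ Finset.Icc 1 τ, r k) ≤ ∑ k ∈ Finset.Icc 1 τ, M :=
          Finset.sum_le_sum fun k _ => le_trans (le_abs_self _) (hM k)
      _ = (τ : ℝ) * M := by
          rw [Finset.sum_const, Nat.card_Icc]
          simp [nsmul_eq_mul]
      _ ≤ M * ((τ : ℝ) + 1) := by nlinarith
  have hle : ∀ τ : ℕ, (∑ k ∈ Finset.Icc 1 τ, r k) ≤ S * ((τ : ℝ) + 1) := by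
    intro τ
    have h := le_ciSup hA τ
    have hpos : (0:ℝ) < (τ : ℝ) + 1 := by positivity
    rw [div_le_iff₀ hpos] at h
    simpa [mul_comm] using h
  have hS0 : 0 ≤ S := by
    have h := le_ciSup hA 0
    simpa using h
  have hΔge : ∀ t : ℕ, 1 ≤ t → 1 ≤ Δ t := by
    intro t ht
    rcases Nat.exists_eq_add_of_le ht with ⟨n, rfl⟩
    cases n with
    | zero => simp [hΔ1]
    | succ m =>
        have hr := hrec (1 + m) (by omega)
        have : 1 + (m + 1) = (1 + m) + 1 := by omega
        rw [this, hr]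
        split <;> omega
  have hsplit : ∀ n : ℕ, 1 ≤ n →
      ∑ k ∈ Finset.Icc 1 n, r k = ∑ k ∈ Finset.Icc 1 (n - 1), r k + r n := by
    intro n hn
    obtain ⟨m, rfl⟩ : ∃ m, n = m + 1 := ⟨n - 1, by omega⟩
    rw [Finset.sum_Icc_succ_top (by omega : 1 ≤ m + 1)]
    simp
  have main : ∀ T : ℕ, (∑ t ∈ Finset.Icc 1 T, (if c t then 0 else r (Δ t)))
      ≤ S * ((T : ℝ) + 1 - (Δ (T + 1) : ℝ)) + ∑ k ∈ Finset.Icc 1 (Δ (T + 1) - 1), r k := by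
    intro T
    induction T with
    | zero => simp [hΔ1]
    | succ T ih =>
        rw [Finset.sum_Icc_succ_top (by omega : 1 ≤ T + 1)]
        have hd : 1 ≤ Δ (T + 1) := hΔge _ (by omega)
        have hcast : ((Δ (T + 1) - 1 : ℕ) : ℝ) = (Δ (T + 1) : ℝ) - 1 := by
          push_cast [hd]; ring
        have hr := hrec (T + 1) (by omega)
        by_cases hc : c (T + 1)
        · have h2 := hle (Δ (T + 1) - 1)
          rw [hcast] at h2
          rw [if_pos hc, hr, if_pos hc]
          have he : (∑ k ∈ Finset.Icc 1 (1 - 1), r k) = 0 := by simp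
          rw [he]
          push_cast at ih ⊢
          linarith
        · rw [if_neg hc, hr, if_neg hc]
          have h3 : Δ (T + 1) + 1 - 1 = Δ (T + 1) := by omega
          rw [h3, hsplit (Δ (T + 1)) hd]
          push_cast at ih ⊢
          linarith
  have gbound : ∀ T : ℕ, (∑ t ∈ Finset.Icc 1 T, (if c t then 0 else r (Δ t)))
      ≤ S * ((T : ℝ) + 1) := by
    intro T
    have hd : 1 ≤ Δ (T + 1) := hΔge _ (by omega)
    have hcast : ((Δ (T + 1) - 1 : ℕ) : ℝ) = (Δ (T + 1) : ℝ) - 1 := by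
      push_cast [hd]; ring
    have h2 := hle (Δ (T + 1) - 1)
    rw [hcast] at h2
    have := main T
    linarith
  have hub : ∀ᶠ T : ℕ in atTop,
      (1 / (T : ℝ)) * ∑ t ∈ Finset.Icc 1 T, (if c t then 0 else r (Δ t))
        ≤ S * (1 + 1 / (T : ℝ)) := by
    filter_upwards [eventually_ge_atTop 1] with T hT
    have hT0 : (0:ℝ) < (T : ℝ) := by exact_mod_cast hT
    have heq : S * (1 + 1 / (T : ℝ)) = (1 / (T : ℝ)) * (S * ((T : ℝ) + 1)) := by
      field_simp
    rw [heq]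
    exact mul_le_mul_of_nonneg_left (gbound T) (by positivity)
  have hv : Tendsto (fun T : ℕ => S * (1 + 1 / (T : ℝ))) atTop (nhds S) := by
    have h1 : Tendsto (fun T : ℕ => 1 + 1 / (T : ℝ)) atTop (nhds 1) := by
      have := tendsto_one_div_atTop_nhds_zero_nat (𝕜 := ℝ)
      simpa using (tendsto_const_nhds (x := (1:ℝ))).add this
    simpa using (tendsto_const_nhds (x := S)).mul h1
  have hcb : IsCoboundedUnder (· ≤ ·) atTop
      (fun T : ℕ => (1 / (T : ℝ)) * ∑ t ∈ Finset.Icc 1 T, (if c t then 0 else r (Δ t))) := by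
    apply Filter.isCoboundedUnder_le_of_eventually_le atTop (x := 0)
    filter_upwards with T
    have h0 : (0:ℝ) ≤ ∑ t ∈ Finset.Icc 1 T, (if c t then 0 else r (Δ t)) := by
      refine Finset.sum_nonneg fun t _ => ?_
      split
      · exact le_rfl
      · exact hnn _
    exact mul_nonneg (by positivity) h0
  refine le_trans (Filter.limsup_le_limsup hub hcb hv.isBoundedUnder_le) ?_
  rw [hv.limsup_eq]
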